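/- For the Cline-type density f(x) = a e^{−χ(x)}, setting x_k = e^{2kπ−1} and y_k = e^{(2k+1)π−1} one has x_k < y_k and f(y_k)/f(x_k) → ∞ as k → ∞ (equivalently χ(x_k) − χ(y_k) → ∞); consequently f is not almost decreasing: for every x₀ ≥ 0, sup_{x₀ ≤ x ≤ y < ∞} f(y)/f(x) = ∞. -/
import Mathlib


open MeasureTheory Filter Set

noncomputable section

/-- `χ(x) = x^{1/2 + δ·cos(ln(x+1))}` (real power). -/
def chiFn (δ : ℝ) (x : ℝ) : ℝ := x ^ ((1:ℝ)/2 + δ * Real.cos (Real.log (x + 1)))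

/-- The normalizing constant `a = (∫₀^∞ e^{-χ(y)} dy)⁻¹`. -/
def clineA (δ : ℝ) : ℝ := (∫ y in Set.Ioi (0:ℝ), Real.exp (-chiFn δ y))⁻¹

/-- The Cline-type density `f(x) = a e^{-χ(x)}` for `x ≥ 0`, `0` for `x < 0`. -/
def clineF (δ : ℝ) (x : ℝ) : ℝ :=
  if x < 0 then 0 else clineA δ * Real.exp (-chiFn δ x)

/-- The long-tailed density class `𝓛₀`. -/
def LongTailedDensity (f : ℝ → ℝ) : Prop :=
  (∀ᶠ x in atTop, 0 < f x) ∧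
  ∀ t : ℝ, Tendsto (fun x => f (x + t) / f x) atTop (nhds 1)

/-! ### Auxiliary lemmas -/

lemma chiFn_exp (δ t : ℝ) :
    chiFn δ (Real.exp t) = Real.exp (t * ((1:ℝ)/2 + δ * Real.cos (Real.log (Real.exp t + 1)))) := by
  unfold chiFn
  rw [Real.rpow_def_of_pos (Real.exp_pos t), Real.log_exp]

lemma cos_lip (a b : ℝ) : |Real.cos a - Real.cos b| ≤ |a - b| := by
  rw [Real.cos_sub_cos, abs_mul, abs_mul]
  have h1 : |Real.sin ((a - b) / 2)| ≤ |(a - b) / 2| := Real.abs_sin_le_abs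
  have h2 : |Real.sin ((a + b) / 2)| ≤ 1 :=
    abs_le.2 ⟨Real.neg_one_le_sin _, Real.sin_le_one _⟩
  have h3 : |(a - b) / 2| = |a - b| / 2 := by
    rw [abs_div]; norm_num
  have h4 : (0:ℝ) ≤ |a - b| := abs_nonneg _
  have h5 : (0:ℝ) ≤ |Real.sin ((a - b) / 2)| := abs_nonneg _
  have h6 : (0:ℝ) ≤ |Real.sin ((a + b) / 2)| := abs_nonneg _
  have : |(-2 : ℝ)| = 2 := by norm_num
  rw [this]
  nlinarith [h1, h2, h3]

lemma log_exp_add_one_sub (t : ℝ) : |Real.log (Real.exp t + 1) - t| ≤ Real.exp (-t) := by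
  have h1 : Real.exp t + 1 = Real.exp t * (1 + Real.exp (-t)) := by
    rw [mul_add, mul_one, ← Real.exp_add, add_neg_cancel, Real.exp_zero]
  have hpos : (0:ℝ) < 1 + Real.exp (-t) := by positivity
  rw [h1, Real.log_mul (Real.exp_ne_zero t) (ne_of_gt hpos), Real.log_exp,
    add_sub_cancel_left, abs_of_nonneg (Real.log_nonneg (by nlinarith [Real.exp_pos (-t)]))]
  have := Real.log_le_sub_one_of_pos hpos
  linarith

lemma integrableOn_exp_neg_rpow' {c : ℝ} (hc : 0 < c) :
    IntegrableOn (fun x : ℝ => Real.exp (-x ^ c)) (Ioi (0:ℝ)) := by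
  rw [← integrableOn_Ioi_comp_rpow_iff' (fun x : ℝ => Real.exp (-x ^ c)) (inv_ne_zero hc.ne')]
  have h := Real.GammaIntegral_convergent (s := c⁻¹) (by positivity)
  refine h.congr_fun (fun x hx => ?_) measurableSet_Ioi
  have hx0 : (0:ℝ) < x := hx
  have hxx : (x ^ c⁻¹) ^ c = x := by
    rw [← Real.rpow_mul hx0.le, inv_mul_cancel₀ hc.ne', Real.rpow_one]
  rw [smul_eq_mul, hxx, mul_comm]

lemma measurable_exp_neg_chi (δ : ℝ) : Measurable fun x : ℝ => Real.exp (-chiFn δ x) := by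
  have h1 : Measurable fun x : ℝ => (1:ℝ)/2 + δ * Real.cos (Real.log (x + 1)) := by
    exact (((measurable_id.add_const 1).log.cos).const_mul δ).const_add ((1:ℝ)/2)
  have h2 : Measurable (chiFn δ) := measurable_id.pow h1
  exact h2.neg.exp

lemma integrableOn_exp_neg_chi {δ : ℝ} (hδ0 : 0 < δ) (hδ : δ < 1/2) :
    IntegrableOn (fun x : ℝ => Real.exp (-chiFn δ x)) (Ioi (0:ℝ)) := by
  have hc : (0:ℝ) < 1/2 - δ := by linarith
  rw [← Ioc_union_Ioi_eq_Ioi (zero_le_one (α := ℝ)), integrableOn_union]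
  constructor
  · refine Measure.integrableOn_of_bounded (M := 1) (by simp) 
      (measurable_exp_neg_chi δ).aestronglyMeasurable ?_
    rw [ae_restrict_iff' measurableSet_Ioc]
    filter_upwards with x hx
    have hx0 : (0:ℝ) ≤ x := le_of_lt hx.1
    have hchi : 0 ≤ chiFn δ x := Real.rpow_nonneg hx0 _
    rw [Real.norm_eq_abs, abs_of_nonneg (Real.exp_pos _).le, ← Real.exp_zero]
    exact Real.exp_le_exp.2 (by linarith)
  · refine ((integrableOn_exp_neg_rpow' hc).mono_set
      (Ioi_subset_Ioi zero_le_one)).mono' (measurable_exp_neg_chi δ).aestronglyMeasurable.restrict ?_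
    rw [ae_restrict_iff' measurableSet_Ioi]
    filter_upwards with x hx
    have hx1 : (1:ℝ) ≤ x := le_of_lt hx
    have hcos : -1 ≤ Real.cos (Real.log (x + 1)) := Real.neg_one_le_cos _
    have hexp_le : (1:ℝ)/2 - δ ≤ (1:ℝ)/2 + δ * Real.cos (Real.log (x + 1)) := by nlinarith
    have hchi : x ^ ((1:ℝ)/2 - δ) ≤ chiFn δ x :=
      Real.rpow_le_rpow_of_exponent_le hx1 hexp_le
    rw [Real.norm_eq_abs, abs_of_nonneg (Real.exp_pos _).le]
    exact Real.exp_le_exp.2 (by linarith)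

lemma clineA_pos {δ : ℝ} (hδ0 : 0 < δ) (hδ : δ < 1/2) : 0 < clineA δ := by
  unfold clineA
  rw [inv_pos]
  rw [setIntegral_pos_iff_support_of_nonneg_ae ?_ (integrableOn_exp_neg_chi hδ0 hδ)]
  · have hsupp : (Function.support fun x : ℝ => Real.exp (-chiFn δ x)) = Set.univ := by
      ext x; simp [Function.mem_support, Real.exp_ne_zero]
    rw [hsupp, Set.univ_inter, Real.volume_Ioi]
    exact ENNReal.zero_lt_top
  · filter_upwards with x using (Real.exp_pos _).le


private def cA (k : ℕ) : ℝ := 2 * k * Real.pi - 1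
private def cB (k : ℕ) : ℝ := (2 * k + 1) * Real.pi - 1
private def cc (k : ℕ) : ℝ := Real.cos (Real.log (Real.exp (cA k) + 1))
private def cd (k : ℕ) : ℝ := Real.cos (Real.log (Real.exp (cB k) + 1))
private def cu (δ : ℝ) (k : ℕ) : ℝ := cA k * ((1:ℝ)/2 + δ * cc k)
private def cv (δ : ℝ) (k : ℕ) : ℝ := cB k * ((1:ℝ)/2 + δ * cd k)

theorem cline_density_not_almost_decreasing (δ : ℝ) (hδ0 : 0 < δ) (hδ : δ < 1/2) :
    (∀ k : ℕ, Real.exp (2 * k * Real.pi - 1) < Real.exp ((2 * k + 1) * Real.pi - 1)) ∧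
    Tendsto (fun k : ℕ =>
        clineF δ (Real.exp ((2 * k + 1) * Real.pi - 1)) /
          clineF δ (Real.exp (2 * k * Real.pi - 1))) atTop atTop ∧
    Tendsto (fun k : ℕ =>
        chiFn δ (Real.exp (2 * k * Real.pi - 1)) -
          chiFn δ (Real.exp ((2 * k + 1) * Real.pi - 1))) atTop atTop ∧
    -- consequently f is not almost decreasing
    (∀ x₀ : ℝ, 0 ≤ x₀ → ∀ C : ℝ,
      ∃ x y : ℝ, x₀ ≤ x ∧ x ≤ y ∧ C < clineF δ y / clineF δ x) := by
  have hπ := Real.pi_pos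
  have hπ3 := Real.pi_gt_three
  have hc1 : 0 < Real.cos 1 := by
    apply Real.cos_pos_of_mem_Ioo
    constructor <;> [nlinarith; nlinarith]
  have hAB : ∀ k, cB k = cA k + Real.pi := by intro k; simp only [cA, cB]; ring
  have hA_tend : Tendsto cA atTop atTop := by
    have h1 : Tendsto (fun k : ℕ => 2 * (k:ℝ)) atTop atTop :=
      (tendsto_natCast_atTop_atTop).const_mul_atTop two_pos
    have h2 := h1.atTop_mul_const hπ
    have h3 := tendsto_atTop_add_const_right atTop (-1 : ℝ) h2
    refine h3.congr (fun k => ?_)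
    simp only [cA]; ring
  -- cos values at cA k and cB k
  have hcosA : ∀ k, Real.cos (cA k) = Real.cos 1 := by
    intro k
    have : cA k = -1 + (k : ℤ) * (2 * Real.pi) := by simp only [cA]; push_cast; ring
    rw [this, Real.cos_add_int_mul_two_pi, Real.cos_neg]
  have hcosB : ∀ k, Real.cos (cB k) = -Real.cos 1 := by
    intro k
    have : cB k = (Real.pi - 1) + (k : ℤ) * (2 * Real.pi) := by
      simp only [cB]; push_cast; ring
    rw [this, Real.cos_add_int_mul_two_pi, Real.cos_pi_sub]
  have hchiA : ∀ k, chiFn δ (Real.exp (cA k)) = Real.exp (cu δ k) := fun k => by rw [chiFn_exp]; rfl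
  have hchiB : ∀ k, chiFn δ (Real.exp (cB k)) = Real.exp (cv δ k) := fun k => by rw [chiFn_exp]; rfl
  -- bounds on c and d
  have hc_bd : ∀ k, |cc k - Real.cos 1| ≤ Real.exp (-cA k) := by
    intro k
    have h1 := cos_lip (Real.log (Real.exp (cA k) + 1)) (cA k)
    have h2 := log_exp_add_one_sub (cA k)
    rw [hcosA k] at h1
    exact h1.trans h2
  have hd_bd : ∀ k, |cd k - (-Real.cos 1)| ≤ Real.exp (-cB k) := by
    intro k
    have h1 := cos_lip (Real.log (Real.exp (cB k) + 1)) (cB k)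
    have h2 := log_exp_add_one_sub (cB k)
    rw [hcosB k] at h1
    exact h1.trans h2
  have hexpB_le : ∀ k, Real.exp (-cB k) ≤ Real.exp (-cA k) := by
    intro k
    apply Real.exp_le_exp.2
    rw [hAB k]; linarith
  -- u tends to atTop
  have hu_tend : Tendsto (cu δ) atTop atTop := by
    have hb : Tendsto (fun k => cA k * ((1:ℝ)/2 - δ)) atTop atTop :=
      hA_tend.atTop_mul_const (by linarith)
    apply tendsto_atTop_mono' atTop ?_ hb
    filter_upwards [hA_tend.eventually_ge_atTop 0] with k hk
    have hck : -1 ≤ cc k := Real.neg_one_le_cos _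
    simp only [cu]
    nlinarith [mul_nonneg (mul_nonneg hk hδ0.le) (by linarith : (0:ℝ) ≤ cc k + 1)]
  -- eventually cu δ k - cv δ k ≥ 1
  have huv : ∀ᶠ k in atTop, 1 ≤ cu δ k - cv δ k := by
    have hev1 : ∀ᶠ k in atTop, Real.exp (-cA k) ≤ Real.cos 1 / 2 := by
      filter_upwards [hA_tend.eventually_ge_atTop (-Real.log (Real.cos 1 / 2))] with k hk
      calc Real.exp (-cA k) ≤ Real.exp (Real.log (Real.cos 1 / 2)) :=
            Real.exp_le_exp.2 (by linarith)
        _ = Real.cos 1 / 2 := Real.exp_log (by positivity)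
    filter_upwards [hev1,
      hA_tend.eventually_ge_atTop ((1 + Real.pi * (1/2 + δ)) / (δ * Real.cos 1)),
      hA_tend.eventually_ge_atTop 0] with k h1 h2 h3
    have hcb := hc_bd k
    have hdb := hd_bd k
    have hcl : Real.cos 1 - Real.exp (-cA k) ≤ cc k := by
      have := abs_le.1 hcb; linarith [this.1]
    have hdu : cd k ≤ -Real.cos 1 + Real.exp (-cA k) := by
      have := abs_le.1 hdb
      have := hexpB_le k
      linarith [(abs_le.1 hdb).2]
    have hcd : Real.cos 1 ≤ cc k - cd k := by linarith
    have hd1 : cd k ≤ 1 := Real.cos_le_one _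
    have key : 1 + Real.pi * (1/2 + δ) ≤ cA k * (δ * Real.cos 1) := by
      have hpos : 0 < δ * Real.cos 1 := by positivity
      exact (div_le_iff₀ hpos).mp h2
    have hmul : (cA k * δ) * Real.cos 1 ≤ (cA k * δ) * (cc k - cd k) :=
      mul_le_mul_of_nonneg_left hcd (mul_nonneg h3 hδ0.le)
    have hmul2 : (Real.pi * δ) * cd k ≤ (Real.pi * δ) * 1 :=
      mul_le_mul_of_nonneg_left hd1 (by positivity)
    simp only [cu, cv, hAB k]
    have expand : cA k * ((1:ℝ)/2 + δ * cc k) - (cA k + Real.pi) * ((1:ℝ)/2 + δ * cd k)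
        = (cA k * δ) * (cc k - cd k) - Real.pi * (1/2) - (Real.pi * δ) * cd k := by ring
    rw [expand]
    nlinarith [key, hmul, hmul2]
  -- the chi difference tends to atTop
  have part3 : Tendsto (fun k => Real.exp (cu δ k) - Real.exp (cv δ k)) atTop atTop := by
    have he1 : Real.exp (-1 : ℝ) < 1 := Real.exp_lt_one_iff.mpr (by norm_num)
    have hb : Tendsto (fun k => (1 - Real.exp (-1 : ℝ)) * Real.exp (cu δ k)) atTop atTop :=
      (Real.tendsto_exp_atTop.comp hu_tend).const_mul_atTop (by linarith)
    apply tendsto_atTop_mono' atTop ?_ hb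
    filter_upwards [huv] with k hk
    have h1 : Real.exp (cv δ k) ≤ Real.exp (cu δ k - 1) := Real.exp_le_exp.2 (by linarith)
    rw [Real.exp_sub] at h1
    have h2 : Real.exp (cu δ k) / Real.exp 1 = Real.exp (cu δ k) * Real.exp (-1 : ℝ) := by
      rw [Real.exp_neg]; ring
    rw [h2] at h1
    nlinarith [Real.exp_pos (cu δ k)]
  have part3' : Tendsto (fun k : ℕ =>
      chiFn δ (Real.exp (2 * k * Real.pi - 1)) -
        chiFn δ (Real.exp ((2 * k + 1) * Real.pi - 1))) atTop atTop := by
    refine part3.congr (fun k => ?_)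
    rw [← hchiA k, ← hchiB k]
    simp only [cA, cB]
  -- the ratio tends to atTop
  have ha := clineA_pos hδ0 hδ
  have hratio : ∀ k, clineF δ (Real.exp (cB k)) / clineF δ (Real.exp (cA k)) =
      Real.exp (chiFn δ (Real.exp (cA k)) - chiFn δ (Real.exp (cB k))) := by
    intro k
    have hFB : clineF δ (Real.exp (cB k)) = clineA δ * Real.exp (-chiFn δ (Real.exp (cB k))) := by
      unfold clineF; rw [if_neg (not_lt.mpr (Real.exp_pos _).le)]
    have hFA : clineF δ (Real.exp (cA k)) = clineA δ * Real.exp (-chiFn δ (Real.exp (cA k))) := by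
      unfold clineF; rw [if_neg (not_lt.mpr (Real.exp_pos _).le)]
    rw [hFB, hFA, mul_div_mul_left _ _ (ne_of_gt ha), ← Real.exp_sub, neg_sub_neg]
  have part2 : Tendsto (fun k : ℕ =>
      clineF δ (Real.exp ((2 * k + 1) * Real.pi - 1)) /
        clineF δ (Real.exp (2 * k * Real.pi - 1))) atTop atTop := by
    have := Real.tendsto_exp_atTop.comp part3'
    refine this.congr (fun k => ?_)
    exact (hratio k).symm
  refine ⟨?_, part2, part3', ?_⟩
  · intro k
    apply Real.exp_lt_exp.2
    nlinarith
  · intro x₀ hx₀ C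
    have hxk : Tendsto (fun k : ℕ => Real.exp (cA k)) atTop atTop :=
      Real.tendsto_exp_atTop.comp hA_tend
    have h1 := part2.eventually_gt_atTop C
    have h2 := hxk.eventually_ge_atTop x₀
    obtain ⟨k, hk1, hk2⟩ := (h1.and h2).exists
    exact ⟨Real.exp (cA k), Real.exp (cB k), hk2,
      (Real.exp_le_exp.2 (by simp only [cA, cB]; nlinarith)), hk1⟩
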